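/- (Corollary Oleinik, Hopf–Lax form.) Let J be a nonempty closed interval of ℝ and let u_T : ℝ → ℝ be bounded, left continuous, with values in J. Then u_T satisfies the Oleinik condition (O) at T if and only if there exists a Lipschitz function U_o : ℝ → ℝ with U_o'(x) ∈ J for a.e. x such that S_T U_o = U_T, i.e. for every x ∈ ℝ, inf_{ξ ∈ ℝ} [U_o(ξ) + T·f*((x − ξ)/T)] = U_T(x). -/

import Mathlib

open Filter MeasureTheory

/-- Condition (f): `f` is `C²`, strongly convex (`f'' > 0` everywhere), and
`f' → ∓∞` at `∓∞`. -/
def CondF (f : ℝ → ℝ) : Prop :=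
  ContDiff ℝ 2 f ∧ (∀ x, 0 < deriv (deriv f) x) ∧
    Tendsto (deriv f) atBot atBot ∧ Tendsto (deriv f) atTop atTop

/-- The Legendre transform `f*(y) = sup_x (y·x − f(x))`. -/
noncomputable def legendre (f : ℝ → ℝ) (y : ℝ) : ℝ :=
  sSup (Set.range fun x => y * x - f x)

/-- `U_T(x) = ∫_{x̌}^x u_T`. -/
noncomputable def UT (uT : ℝ → ℝ) (xc x : ℝ) : ℝ := ∫ ξ in xc..x, uT ξ

/-- `U_o^♭(x) = sup_ξ [U_T(ξ) − T f*((ξ−x)/T)]`. -/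
noncomputable def Uflat (f : ℝ → ℝ) (T : ℝ) (uT : ℝ → ℝ) (xc x : ℝ) : ℝ :=
  sSup (Set.range fun ξ => UT uT xc ξ - T * legendre f ((ξ - x) / T))

/-- `M(x)`: the set of maximizers in the definition of `U_o^♭(x)`. -/
def MSet (f : ℝ → ℝ) (T : ℝ) (uT : ℝ → ℝ) (xc x : ℝ) : Set ℝ :=
  {ξ | UT uT xc ξ = Uflat f T uT xc x + T * legendre f ((ξ - x) / T)}

/-- Oleinik condition (O) at `T`. -/
def Oleinik (f : ℝ → ℝ) (T : ℝ) (uT : ℝ → ℝ) : Prop :=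
  ∀ x Δ : ℝ, 0 < Δ → deriv f (uT (x + Δ)) - deriv f (uT x) ≤ Δ / T

/-- The Hopf–Lax operator at time `T`: `(S_T U)(x) = inf_ξ [U(ξ) + T f*((x−ξ)/T)]`. -/
noncomputable def HopfLax (f : ℝ → ℝ) (T : ℝ) (U : ℝ → ℝ) (x : ℝ) : ℝ :=
  sInf (Set.range fun ξ => U ξ + T * legendre f ((x - ξ) / T))

/-- Left continuity of a real function. -/
def LeftCts (u : ℝ → ℝ) : Prop :=
  ∀ x, Tendsto u (nhdsWithin x (Set.Iio x)) (nhds (u x))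

/-- `II_T(U_T; J)`: Lipschitz functions with a.e. derivative in `J` evolving into `U_T`
under the Hopf–Lax semigroup. -/
def IIT (f : ℝ → ℝ) (T : ℝ) (uT : ℝ → ℝ) (xc : ℝ) (J : Set ℝ) : Set (ℝ → ℝ) :=
  {U | (∃ K, LipschitzWith K U) ∧ (∀ᵐ x ∂volume, deriv U x ∈ J) ∧
    ∀ x, HopfLax f T U x = UT uT xc x}

/-- `U_o^♯(x) = sup { U(x) : U ∈ II_T(U_T; J) }`. -/
noncomputable def Usharp (f : ℝ → ℝ) (T : ℝ) (uT : ℝ → ℝ) (xc : ℝ) (J : Set ℝ) (x : ℝ) : ℝ :=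
  sSup ((fun U : ℝ → ℝ => U x) '' IIT f T uT xc J)

structure LegPack (f : ℝ → ℝ) where
  h : ℝ → ℝ
  hd : ∀ x, HasDerivAt f (deriv f x) x
  gmono : StrictMono (deriv f)
  gcont : Continuous (deriv f)
  gh : ∀ y, deriv f (h y) = y
  hg : ∀ x, h (deriv f x) = x
  hmono : StrictMono h
  hcont : Continuous h

noncomputable def CondF.pack {f : ℝ → ℝ} (hf : CondF f) : LegPack f := by
  have hdiff : Differentiable ℝ f := hf.1.differentiable (by norm_num)
  have hd : ∀ x, HasDerivAt f (deriv f x) x := fun x => (hdiff x).hasDerivAt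
  have gmono : StrictMono (deriv f) := strictMono_of_deriv_pos hf.2.1
  have gcont : Continuous (deriv f) := hf.1.continuous_deriv (by norm_num)
  have gsurj : Function.Surjective (deriv f) :=
    Continuous.surjective gcont hf.2.2.2 hf.2.2.1
  let e : ℝ ≃o ℝ := StrictMono.orderIsoOfSurjective (deriv f) gmono gsurj
  refine ⟨e.symm, hd, gmono, gcont, ?_, ?_, ?_, e.symm.continuous⟩
  · exact fun y => StrictMono.orderIsoOfSurjective_self_symm_apply _ gmono gsurj y
  · exact fun x => StrictMono.orderIsoOfSurjective_symm_apply_self _ gmono gsurj x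
  · exact e.symm.strictMono

namespace LegPack
variable {f : ℝ → ℝ} (P : LegPack f)
include P

theorem hasDerivAt_phi (p w : ℝ) :
    HasDerivAt (fun w => p * w - f w) (p - deriv f w) w := by
  have h := ((hasDerivAt_id' w).const_mul p).sub (P.hd w)
  simp only [mul_one] at h
  exact h

theorem phi_le (p w : ℝ) : p * w - f w ≤ p * P.h p - f (P.h p) := by
  set w0 := P.h p with hw0
  have hgw0 : deriv f w0 = p := P.gh p
  have hdiff : Differentiable ℝ (fun w => p * w - f w) :=
    fun w => (P.hasDerivAt_phi p w).differentiableAt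
  have hderiv : ∀ w, deriv (fun w => p * w - f w) w = p - deriv f w :=
    fun w => (P.hasDerivAt_phi p w).deriv
  rcases le_total w w0 with hw | hw
  · have mono : MonotoneOn (fun w => p * w - f w) (Set.Iic w0) := by
      apply monotoneOn_of_deriv_nonneg (convex_Iic w0) hdiff.continuous.continuousOn
        (hdiff.differentiableOn)
      intro x hx
      rw [interior_Iic] at hx
      rw [hderiv]
      have : deriv f x < p := by rw [← hgw0]; exact P.gmono hx
      linarith
    exact mono hw Set.self_mem_Iic hw
  · have anti : AntitoneOn (fun w => p * w - f w) (Set.Ici w0) := by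
      apply antitoneOn_of_deriv_nonpos (convex_Ici w0) hdiff.continuous.continuousOn
        (hdiff.differentiableOn)
      intro x hx
      rw [interior_Ici] at hx
      rw [hderiv]
      have : p < deriv f x := by rw [← hgw0]; exact P.gmono hx
      linarith
    exact anti Set.self_mem_Ici hw hw

theorem bddAbove (p : ℝ) : BddAbove (Set.range fun w => p * w - f w) :=
  ⟨p * P.h p - f (P.h p), by rintro _ ⟨w, rfl⟩; exact P.phi_le p w⟩

theorem legendre_eq (p : ℝ) : legendre f p = p * P.h p - f (P.h p) := by
  apply le_antisymm
  · exact csSup_le (Set.range_nonempty _) (by rintro _ ⟨w, rfl⟩; exact P.phi_le p w)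
  · exact le_csSup (P.bddAbove p) ⟨P.h p, rfl⟩

theorem young (p w : ℝ) : p * w - f w ≤ legendre f p :=
  le_csSup (P.bddAbove p) ⟨w, rfl⟩

theorem subgrad (p q : ℝ) : (p - q) * P.h q ≤ legendre f p - legendre f q := by
  have h1 := P.young p (P.h q)
  rw [P.legendre_eq q]
  nlinarith [h1]


theorem hasDerivAt_legendre (p : ℝ) : HasDerivAt (legendre f) (P.h p) p := by
  have bound : ∀ q, q ≠ p → |slope (legendre f) p q - P.h p| ≤ |P.h q - P.h p| := by
    intro q hq'
    have hs : slope (legendre f) p q = (legendre f q - legendre f p) / (q - p) := by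
      rw [slope_def_field]
    rw [hs]
    set S := (legendre f q - legendre f p) / (q - p) with hS
    have s1 := P.subgrad q p
    have s2 := P.subgrad p q
    rcases lt_or_gt_of_ne hq' with hlt | hgt
    · have hd : q - p < 0 := by linarith
      have h1 : S ≤ P.h p := by
        rw [hS, div_le_iff_of_neg hd]; nlinarith
      have h2 : P.h q ≤ S := by
        rw [hS, le_div_iff_of_neg hd]; nlinarith
      rw [abs_le]
      constructor
      · have := neg_abs_le (P.h q - P.h p); linarith
      · have : (0:ℝ) ≤ |P.h q - P.h p| := abs_nonneg _
        linarith
    · have hd : 0 < q - p := by linarith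
      have h1 : P.h p ≤ S := by
        rw [hS, le_div_iff₀ hd]; nlinarith
      have h2 : S ≤ P.h q := by
        rw [hS, div_le_iff₀ hd]; nlinarith
      rw [abs_le]
      constructor
      · have : (0:ℝ) ≤ |P.h q - P.h p| := abs_nonneg _
        linarith
      · have := le_abs_self (P.h q - P.h p); linarith
  have h0 : Tendsto (fun q => |P.h q - P.h p|) (nhdsWithin p {p}ᶜ) (nhds 0) := by
    have h1 : Tendsto P.h (nhdsWithin p {p}ᶜ) (nhds (P.h p)) :=
      (P.hcont.tendsto p).mono_left nhdsWithin_le_nhds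
    simpa [Real.dist_eq] using tendsto_iff_dist_tendsto_zero.1 h1
  rw [hasDerivAt_iff_tendsto_slope, tendsto_iff_dist_tendsto_zero]
  exact squeeze_zero' (Filter.Eventually.of_forall fun q => dist_nonneg)
    (by filter_upwards [self_mem_nhdsWithin] with q hq;
        rw [Real.dist_eq]; exact bound q hq) h0

theorem legendre_cont : Continuous (legendre f) :=
  continuous_iff_continuousAt.2 fun p => (P.hasDerivAt_legendre p).continuousAt

theorem leg_integral {T : ℝ} (hT : 0 < T) (c a b : ℝ) :
    (∫ s in a..b, P.h ((s - c) / T)) =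
      T * legendre f ((b - c) / T) - T * legendre f ((a - c) / T) := by
  have hder : ∀ s : ℝ, HasDerivAt (fun s => T * legendre f ((s - c) / T))
      (P.h ((s - c) / T)) s := by
    intro s
    have h1 : HasDerivAt (fun s : ℝ => (s - c) / T) (1 / T) s := by
      simpa using ((hasDerivAt_id s).sub_const c).div_const T
    have h2 := ((P.hasDerivAt_legendre ((s - c) / T)).comp s h1).const_mul T
    refine h2.congr_deriv ?_
    rw [mul_comm (P.h _), ← mul_assoc, mul_one_div_cancel hT.ne', one_mul]
  exact intervalIntegral.integral_eq_sub_of_hasDerivAt (fun s _ => hder s)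
    ((P.hcont.comp (by continuity)).intervalIntegrable a b)

theorem fourpoint {a b c d : ℝ} (hab : a < b) (hbc : b ≤ c) (hcd : c < d)
    (hsum : a + d = b + c) :
    legendre f b + legendre f c < legendre f a + legendre f d := by
  set m := (c + d) / 2 with hm
  have hcm : c < m := by rw [hm]; linarith
  have hmd : m < d := by rw [hm]; linarith
  have h1 := P.subgrad d m
  have h2 := P.subgrad m c
  have h3 := P.subgrad a b
  have hb_m : P.h b < P.h m := P.hmono (lt_of_le_of_lt hbc hcm)
  have hb_c : P.h b ≤ P.h c := P.hmono.monotone hbc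
  have p1 : 0 < (d - m) * (P.h m - P.h b) :=
    mul_pos (by linarith) (by linarith)
  have p2 : 0 ≤ (m - c) * (P.h c - P.h b) :=
    mul_nonneg (by linarith) (by linarith)
  have h4 : (a - b) * P.h b = (c - d) * P.h b := by
    rw [show a - b = c - d by linarith]
  nlinarith [h1, h2, h3, h4, p1, p2]

end LegPack



theorem bdd_intervalIntegrable {u : ℝ → ℝ} (hu : Measurable u) {C : ℝ}
    (hC : ∀ x, |u x| ≤ C) (a b : ℝ) : IntervalIntegrable u volume a b := by
  rw [intervalIntegrable_iff]
  apply Integrable.mono' (g := fun _ => C)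
  · exact integrableOn_const (by rw [Set.uIoc]; exact measure_Ioc_lt_top.ne)
  · exact hu.aestronglyMeasurable.restrict
  · exact Filter.Eventually.of_forall fun x => by
      simpa [Real.norm_eq_abs] using hC x

theorem UT_sub {u : ℝ → ℝ} (hi : ∀ a b : ℝ, IntervalIntegrable u volume a b)
    (xc a b : ℝ) : UT u xc b - UT u xc a = ∫ s in a..b, u s := by
  rw [UT, UT, intervalIntegral.integral_interval_sub_left (hi xc b) (hi xc a)]

theorem left_quot_tendsto {u : ℝ → ℝ} (hu : Measurable u) {C : ℝ} (hC : ∀ x, |u x| ≤ C)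
    {x : ℝ} (hlc : Tendsto u (nhdsWithin x (Set.Iio x)) (nhds (u x))) (xc : ℝ) :
    Tendsto (fun θ : ℝ => (UT u xc x - UT u xc (x - θ)) / θ)
      (nhdsWithin 0 (Set.Ioi 0)) (nhds (u x)) := by
  have hi : ∀ a b : ℝ, IntervalIntegrable u volume a b := bdd_intervalIntegrable hu hC
  rw [Metric.tendsto_nhdsWithin_nhds]
  rw [Metric.tendsto_nhdsWithin_nhds] at hlc
  intro ε hε
  obtain ⟨δ, hδ, hδ'⟩ := hlc (ε/2) (by linarith)
  refine ⟨δ, hδ, ?_⟩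
  intro θ hθ hθδ
  have hθ0 : (0:ℝ) < θ := hθ
  have hθδ' : θ < δ := by
    rw [Real.dist_eq, sub_zero, abs_of_pos hθ0] at hθδ; exact hθδ
  have hUT : UT u xc x - UT u xc (x - θ) = ∫ s in (x-θ)..x, u s := UT_sub hi xc _ _
  have hkey : (∫ s in (x-θ)..x, u s) - θ * u x = ∫ s in (x-θ)..x, (u s - u x) := by
    rw [intervalIntegral.integral_sub (hi _ _) intervalIntegrable_const,
      intervalIntegral.integral_const]
    simp
  have hbound : ‖∫ s in (x-θ)..x, (u s - u x)‖ ≤ (ε/2) * |x - (x-θ)| := by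
    apply intervalIntegral.norm_integral_le_of_norm_le_const
    intro s hs
    rw [Set.uIoc_of_le (by linarith)] at hs
    rcases eq_or_lt_of_le hs.2 with h | h
    · simp [h]; linarith
    · have hd : dist s x < δ := by
        rw [Real.dist_eq, abs_of_neg (by linarith)]; linarith [hs.1]
      have := le_of_lt (hδ' h hd)
      simpa [Real.dist_eq, Real.norm_eq_abs] using this
  rw [Real.dist_eq]
  have heq : (UT u xc x - UT u xc (x - θ)) / θ - u x
      = (∫ s in (x-θ)..x, (u s - u x)) / θ := by
    rw [hUT, ← hkey]; field_simp
  rw [heq, abs_div, abs_of_pos hθ0, div_lt_iff₀ hθ0]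
  have h2 : |x - (x - θ)| = θ := by rw [show x - (x - θ) = θ by ring, abs_of_pos hθ0]
  rw [h2] at hbound
  rw [Real.norm_eq_abs] at hbound
  nlinarith


theorem leg_lower {f : ℝ → ℝ} (P : LegPack f) (c z : ℝ) :
    c * |z| - max (f c) (f (-c)) ≤ legendre f z := by
  have h1 := P.young z c
  have h2 := P.young z (-c)
  have m1 := le_max_left (f c) (f (-c))
  have m2 := le_max_right (f c) (f (-c))
  rcases abs_cases z with ⟨h, _⟩ | ⟨h, _⟩ <;> rw [h] <;> nlinarith

theorem UT_dist {u : ℝ → ℝ} (hu : Measurable u) {C : ℝ} (hC : ∀ x, |u x| ≤ C)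
    (xc a b : ℝ) : |UT u xc b - UT u xc a| ≤ C * |b - a| := by
  rw [UT_sub (bdd_intervalIntegrable hu hC) xc a b]
  have := intervalIntegral.norm_integral_le_of_norm_le_const
    (f := u) (a := a) (b := b) (C := C)
    (fun s _ => by simpa [Real.norm_eq_abs] using hC s)
  simpa [Real.norm_eq_abs] using this

theorem int_bounds {u : ℝ → ℝ} (hu : Measurable u) {C : ℝ} (hC : ∀ x, |u x| ≤ C)
    {A B : ℝ} (hA : ∀ x, A ≤ u x) (hB : ∀ x, u x ≤ B) {a b : ℝ} (hab : a ≤ b) :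
    A * (b - a) ≤ (∫ s in a..b, u s) ∧ (∫ s in a..b, u s) ≤ B * (b - a) := by
  have hi := bdd_intervalIntegrable hu hC a b
  constructor
  · have := intervalIntegral.integral_mono_on hab intervalIntegrable_const hi
      (fun x _ => hA x)
    simpa [intervalIntegral.integral_const, mul_comm] using this
  · have := intervalIntegral.integral_mono_on hab hi intervalIntegrable_const
      (fun x _ => hB x)
    simpa [intervalIntegral.integral_const, mul_comm] using this

theorem bddAbove_flat {f : ℝ → ℝ} (P : LegPack f) {T : ℝ} (hT : 0 < T)
    {u : ℝ → ℝ} (hu : Measurable u) {C : ℝ} (hC : ∀ x, |u x| ≤ C) (xc x : ℝ) :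
    BddAbove (Set.range fun ξ => UT u xc ξ - T * legendre f ((ξ - x) / T)) := by
  have hC0 : 0 ≤ C := le_trans (abs_nonneg _) (hC 0)
  refine ⟨UT u xc x + T * max (f (C+1)) (f (-(C+1))), ?_⟩
  rintro _ ⟨ξ, rfl⟩
  have h1 : UT u xc ξ - UT u xc x ≤ C * |ξ - x| :=
    le_trans (le_abs_self _) (UT_dist hu hC xc x ξ)
  have h2 := leg_lower P (C+1) ((ξ - x) / T)
  have h3 : |(ξ - x) / T| = |ξ - x| / T := by
    rw [abs_div, abs_of_pos hT]
  rw [h3] at h2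
  have h4 : T * ((C+1) * (|ξ - x| / T) - max (f (C+1)) (f (-(C+1)))) ≤
      T * legendre f ((ξ - x) / T) :=
    mul_le_mul_of_nonneg_left h2 (le_of_lt hT)
  have h5 : T * ((C+1) * (|ξ - x| / T)) = (C+1) * |ξ - x| := by
    field_simp
  have habs : 0 ≤ |ξ - x| := abs_nonneg _
  nlinarith [h4]

theorem flat_slope {f : ℝ → ℝ} (P : LegPack f) {T : ℝ} (hT : 0 < T)
    {u : ℝ → ℝ} (hu : Measurable u) {C : ℝ} (hC : ∀ x, |u x| ≤ C)
    {A B : ℝ} (hA : ∀ x, A ≤ u x) (hB : ∀ x, u x ≤ B) (xc : ℝ)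
    {x y : ℝ} (hxy : x ≤ y) :
    A * (y - x) ≤ Uflat f T u xc y - Uflat f T u xc x ∧
      Uflat f T u xc y - Uflat f T u xc x ≤ B * (y - x) := by
  have hint : ∀ η : ℝ, A * (y - x) ≤ UT u xc (η + (y - x)) - UT u xc η ∧
      UT u xc (η + (y - x)) - UT u xc η ≤ B * (y - x) := by
    intro η
    have hsub := UT_sub (bdd_intervalIntegrable hu hC) xc η (η + (y - x))
    have hb := int_bounds hu hC hA hB (a := η) (b := η + (y - x)) (by linarith)
    rw [hsub]
    constructor
    · have := hb.1; rw [show η + (y - x) - η = y - x by ring] at this; exact this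
    · have := hb.2; rw [show η + (y - x) - η = y - x by ring] at this; exact this
  constructor
  · have key : Uflat f T u xc x ≤ Uflat f T u xc y - A * (y - x) := by
      rw [Uflat]
      apply csSup_le (Set.range_nonempty _)
      rintro _ ⟨η, rfl⟩
      have h1 : UT u xc η - T * legendre f ((η - x) / T) + A * (y - x) ≤
          UT u xc (η + (y - x)) - T * legendre f ((η + (y - x) - y) / T) := by
        have := (hint η).1
        rw [show (η + (y - x) - y) = η - x by ring]
        linarith
      have h2 := le_csSup (bddAbove_flat P hT hu hC xc y) ⟨η + (y - x), rfl⟩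
      rw [Uflat]
      dsimp at h2 ⊢
      linarith
    linarith
  · rw [Uflat, Uflat, sub_le_iff_le_add]
    apply csSup_le (Set.range_nonempty _)
    rintro _ ⟨η, rfl⟩
    have h1 : UT u xc η - T * legendre f ((η - y) / T) ≤
        (UT u xc (η - (y - x)) - T * legendre f ((η - (y - x) - x) / T)) + B * (y - x) := by
      have := (hint (η - (y - x))).2
      rw [show η - (y - x) + (y - x) = η by ring] at this
      rw [show (η - (y - x) - x) = η - y by ring]
      linarith
    have h2 := le_csSup (bddAbove_flat P hT hu hC xc x) ⟨η - (y - x), rfl⟩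
    dsimp at h2 ⊢
    linarith

theorem flat_lipschitz {f : ℝ → ℝ} (P : LegPack f) {T : ℝ} (hT : 0 < T)
    {u : ℝ → ℝ} (hu : Measurable u) {C : ℝ} (hC : ∀ x, |u x| ≤ C) (xc : ℝ) :
    LipschitzWith (Real.toNNReal C) (Uflat f T u xc) := by
  have hC0 : 0 ≤ C := le_trans (abs_nonneg _) (hC 0)
  have hA : ∀ x, -C ≤ u x := fun x => (abs_le.1 (hC x)).1
  have hB : ∀ x, u x ≤ C := fun x => (abs_le.1 (hC x)).2
  apply LipschitzWith.of_dist_le_mul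
  intro a b
  rw [Real.dist_eq, Real.dist_eq, Real.coe_toNNReal _ hC0]
  rcases le_total a b with h | h
  · have hs := flat_slope P hT hu hC hA hB xc h
    have habs : |a - b| = b - a := by rw [abs_sub_comm, abs_of_nonneg (by linarith)]
    rw [habs, abs_le]
    constructor <;> [linarith [hs.2]; linarith [hs.1]]
  · have hs := flat_slope P hT hu hC hA hB xc h
    have habs : |a - b| = a - b := abs_of_nonneg (by linarith)
    rw [habs, abs_le]
    constructor <;> [linarith [hs.2]; linarith [hs.1]]

theorem flat_deriv_mem {f : ℝ → ℝ} (P : LegPack f) {T : ℝ} (hT : 0 < T)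
    {u : ℝ → ℝ} (hu : Measurable u) {C : ℝ} (hC : ∀ x, |u x| ≤ C)
    {A B : ℝ} (hA : ∀ x, A ≤ u x) (hB : ∀ x, u x ≤ B) (xc : ℝ) :
    ∀ᵐ x ∂(volume : Measure ℝ), deriv (Uflat f T u xc) x ∈ Set.Icc A B := by
  filter_upwards [(flat_lipschitz P hT hu hC xc).ae_differentiableAt] with x hx
  have hd := hx.hasDerivAt
  have hdd := hd.deriv
  rw [hasDerivAt_iff_tendsto_slope] at hd
  have hbound : ∀ y : ℝ, y ≠ x →
      slope (Uflat f T u xc) x y ∈ Set.Icc A B := by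
    intro y hy
    have hs : slope (Uflat f T u xc) x y
        = (Uflat f T u xc y - Uflat f T u xc x) / (y - x) := by rw [slope_def_field]
    rcases lt_or_gt_of_ne hy with hlt | hgt
    · have := flat_slope P hT hu hC hA hB xc (le_of_lt hlt)
      have hyx : x - y > 0 := by linarith
      constructor
      · rw [hs, le_div_iff_of_neg (by linarith : y - x < 0)]; nlinarith [this.2]
      · rw [hs, div_le_iff_of_neg (by linarith : y - x < 0)]; nlinarith [this.1]
    · have := flat_slope P hT hu hC hA hB xc (le_of_lt hgt)
      constructor
      · rw [hs, le_div_iff₀ (by linarith : (0:ℝ) < y - x)]; nlinarith [this.1]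
      · rw [hs, div_le_iff₀ (by linarith : (0:ℝ) < y - x)]; nlinarith [this.2]
  rw [← hdd]
  constructor
  · exact ge_of_tendsto hd (by
      filter_upwards [self_mem_nhdsWithin] with y hy
      exact (hbound y hy).1)
  · exact le_of_tendsto hd (by
      filter_upwards [self_mem_nhdsWithin] with y hy
      exact (hbound y hy).2)

theorem flat_hopflax {f : ℝ → ℝ} (P : LegPack f) {T : ℝ} (hT : 0 < T)
    {u : ℝ → ℝ} (hu : Measurable u) {C : ℝ} (hC : ∀ x, |u x| ≤ C) (xc : ℝ)
    (hol : Oleinik f T u) (x : ℝ) :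
    HopfLax f T (Uflat f T u xc) x = UT u xc x := by
  set ξx := x - T * deriv f (u x) with hξx
  have hp : (x - ξx) / T = deriv f (u x) := by
    rw [hξx]; field_simp; ring
  have hcont : ∀ a b : ℝ, IntervalIntegrable (fun s => P.h ((s - ξx) / T)) volume a b :=
    fun a b => (P.hcont.comp (by continuity)).intervalIntegrable a b
  have star : ∀ η, UT u xc η - T * legendre f ((η - ξx) / T)
      ≤ UT u xc x - T * legendre f ((x - ξx) / T) := by
    intro η
    rcases le_total x η with hxη | hηx
    · have mono : ∀ s ∈ Set.Icc x η, u s ≤ P.h ((s - ξx) / T) := by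
        intro s hs
        rcases eq_or_lt_of_le hs.1 with heq | hlt
        · rw [← heq, hp, P.hg (u x)]
        · have ho := hol x (s - x) (by linarith)
          rw [show x + (s - x) = s by ring] at ho
          have ho' : (deriv f (u s) - deriv f (u x)) * T ≤ s - x :=
            (le_div_iff₀ hT).1 ho
          have hds : deriv f (u s) ≤ (s - ξx) / T := by
            rw [hξx, le_div_iff₀ hT]
            nlinarith
          have hm := P.hmono.monotone hds
          rwa [P.hg (u s)] at hm
      have hle := intervalIntegral.integral_mono_on hxη
        (bdd_intervalIntegrable hu hC x η) (hcont x η) mono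
      rw [P.leg_integral hT ξx x η] at hle
      have hus := UT_sub (bdd_intervalIntegrable hu hC) xc x η
      linarith
    · have mono : ∀ s ∈ Set.Icc η x, P.h ((s - ξx) / T) ≤ u s := by
        intro s hs
        rcases eq_or_lt_of_le hs.2 with heq | hlt
        · rw [heq, hp, P.hg (u x)]
        · have ho := hol s (x - s) (by linarith)
          rw [show s + (x - s) = x by ring] at ho
          have ho' : (deriv f (u x) - deriv f (u s)) * T ≤ x - s :=
            (le_div_iff₀ hT).1 ho
          have hds : (s - ξx) / T ≤ deriv f (u s) := by
            rw [hξx, div_le_iff₀ hT]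
            nlinarith
          have hm := P.hmono.monotone hds
          rwa [P.hg (u s)] at hm
      have hle := intervalIntegral.integral_mono_on hηx
        (hcont η x) (bdd_intervalIntegrable hu hC η x) mono
      rw [P.leg_integral hT ξx η x] at hle
      have hus := UT_sub (bdd_intervalIntegrable hu hC) xc η x
      linarith
  have lb : ∀ ξ, UT u xc x ≤ Uflat f T u xc ξ + T * legendre f ((x - ξ) / T) := by
    intro ξ
    have h1 : UT u xc x - T * legendre f ((x - ξ) / T) ≤ Uflat f T u xc ξ :=
      le_csSup (bddAbove_flat P hT hu hC xc ξ) ⟨x, rfl⟩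
    linarith
  have ub : Uflat f T u xc ξx ≤ UT u xc x - T * legendre f ((x - ξx) / T) :=
    csSup_le (Set.range_nonempty _) (by rintro _ ⟨η, rfl⟩; exact star η)
  apply le_antisymm
  · have h1 : HopfLax f T (Uflat f T u xc) x
        ≤ Uflat f T u xc ξx + T * legendre f ((x - ξx) / T) :=
      csInf_le ⟨UT u xc x, by rintro _ ⟨ξ, rfl⟩; exact lb ξ⟩ ⟨ξx, rfl⟩
    linarith
  · exact le_csInf (Set.range_nonempty _) (by rintro _ ⟨ξ, rfl⟩; exact lb ξ)

theorem hl_minimizer {f : ℝ → ℝ} (P : LegPack f) {T : ℝ} (hT : 0 < T)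
    {Uo : ℝ → ℝ} {k : ℝ} (hk : 0 ≤ k) (hlip : ∀ a b : ℝ, |Uo a - Uo b| ≤ k * |a - b|)
    (x : ℝ) :
    ∃ ξ, (∀ ξ', Uo ξ + T * legendre f ((x - ξ) / T)
        ≤ Uo ξ' + T * legendre f ((x - ξ') / T))
      ∧ HopfLax f T Uo x = Uo ξ + T * legendre f ((x - ξ) / T) := by
  set D : ℝ := max (f (k+1)) (f (-(k+1))) with hD
  have coer : ∀ ξ, Uo x + |x - ξ| - T * D ≤ Uo ξ + T * legendre f ((x - ξ) / T) := by
    intro ξ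
    have h1 : Uo x - k * |x - ξ| ≤ Uo ξ := by
      have := hlip x ξ
      have := le_abs_self (Uo x - Uo ξ)
      linarith
    have h2 := leg_lower P (k+1) ((x - ξ) / T)
    rw [abs_div, abs_of_pos hT] at h2
    have h4 : T * ((k+1) * (|x - ξ| / T) - D) ≤ T * legendre f ((x - ξ) / T) :=
      mul_le_mul_of_nonneg_left h2 (le_of_lt hT)
    have h5 : T * ((k+1) * (|x - ξ| / T)) = (k+1) * |x - ξ| := by field_simp
    have habs : 0 ≤ |x - ξ| := abs_nonneg _
    nlinarith [h4]
  have hUoc : Continuous Uo := by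
    have : LipschitzWith (Real.toNNReal k) Uo := by
      apply LipschitzWith.of_dist_le_mul
      intro a b
      rw [Real.dist_eq, Real.dist_eq, Real.coe_toNNReal _ hk]
      exact hlip a b
    exact this.continuous
  have hcont : Continuous (fun ξ => Uo ξ + T * legendre f ((x - ξ) / T)) := by
    apply hUoc.add
    exact continuous_const.mul ((P.legendre_cont).comp (by continuity))
  set R : ℝ := T * |D| + T * |legendre f 0| + 1 with hR
  have hR0 : 0 < R := by
    have : 0 ≤ T * |D| := mul_nonneg (le_of_lt hT) (abs_nonneg _)
    have : 0 ≤ T * |legendre f 0| := mul_nonneg (le_of_lt hT) (abs_nonneg _)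
    nlinarith
  obtain ⟨ξ0, hξ0mem, hmin⟩ := isCompact_Icc.exists_isMinOn
    (Set.nonempty_Icc.2 (by linarith : x - R ≤ x + R)) hcont.continuousOn
  have hglobal : ∀ ξ', Uo ξ0 + T * legendre f ((x - ξ0) / T)
      ≤ Uo ξ' + T * legendre f ((x - ξ') / T) := by
    intro ξ'
    by_cases hmem : ξ' ∈ Set.Icc (x - R) (x + R)
    · exact isMinOn_iff.1 hmin ξ' hmem
    · have hfar : R < |x - ξ'| := by
        rw [Set.mem_Icc, not_and_or] at hmem
        rcases hmem with h | h
        · push_neg at h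
          rw [abs_of_pos (by linarith)]; linarith
        · push_neg at h
          rw [abs_of_neg (by linarith)]; linarith
      have hx0 : Uo ξ0 + T * legendre f ((x - ξ0) / T)
          ≤ Uo x + T * legendre f ((x - x) / T) :=
        isMinOn_iff.1 hmin x (Set.mem_Icc.2 ⟨by linarith, by linarith⟩)
      rw [sub_self, zero_div] at hx0
      have hc := coer ξ'
      have hDle : T * D ≤ T * |D| := mul_le_mul_of_nonneg_left (le_abs_self _) (le_of_lt hT)
      have hLle : T * legendre f 0 ≤ T * |legendre f 0| :=
        mul_le_mul_of_nonneg_left (le_abs_self _) (le_of_lt hT)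
      nlinarith
  refine ⟨ξ0, hglobal, ?_⟩
  apply le_antisymm
  · exact csInf_le ⟨Uo ξ0 + T * legendre f ((x - ξ0) / T),
      by rintro _ ⟨ξ, rfl⟩; exact hglobal ξ⟩ ⟨ξ0, rfl⟩
  · exact le_csInf (Set.range_nonempty _) (by rintro _ ⟨ξ, rfl⟩; exact hglobal ξ)

theorem min_mono {f : ℝ → ℝ} (P : LegPack f) {T : ℝ} (hT : 0 < T)
    {Uo : ℝ → ℝ} {x1 x2 ξ1 ξ2 : ℝ} (h12 : x1 < x2)
    (hm1 : ∀ ξ', Uo ξ1 + T * legendre f ((x1 - ξ1) / T)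
        ≤ Uo ξ' + T * legendre f ((x1 - ξ') / T))
    (hm2 : ∀ ξ', Uo ξ2 + T * legendre f ((x2 - ξ2) / T)
        ≤ Uo ξ' + T * legendre f ((x2 - ξ') / T)) :
    ξ1 ≤ ξ2 := by
  by_contra hcon
  push_neg at hcon
  set a := (x1 - ξ1) / T with ha
  set b := (x1 - ξ2) / T with hb
  set c := (x2 - ξ1) / T with hc
  set d := (x2 - ξ2) / T with hd
  have hab : a < b := by rw [ha, hb]; gcongr
  have hacc : a < c := by rw [ha, hc, div_lt_div_iff₀ hT hT]; nlinarith
  have hbd : b < d := by rw [hb, hd, div_lt_div_iff₀ hT hT]; nlinarith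
  have hcd : c < d := by rw [hc, hd]; gcongr
  have hsum : a + d = b + c := by rw [ha, hb, hc, hd]; ring
  have hfour : legendre f b + legendre f c < legendre f a + legendre f d := by
    rcases le_total b c with hbc | hcb
    · exact P.fourpoint hab hbc hcd hsum
    · have := P.fourpoint hacc hcb hbd (by linarith)
      linarith
  have e1 := hm1 ξ2
  have e2 := hm2 ξ1
  rw [← hb] at e1
  rw [← hc] at e2
  nlinarith

theorem g_lower {f : ℝ → ℝ} (P : LegPack f) {T : ℝ} (hT : 0 < T)
    {u : ℝ → ℝ} (hu : Measurable u) {C : ℝ} (hC : ∀ x, |u x| ≤ C) (xc : ℝ)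
    {Uo : ℝ → ℝ} (hHL : ∀ z, HopfLax f T Uo z = UT u xc z)
    {k : ℝ} (hk : 0 ≤ k) (hlip : ∀ a b : ℝ, |Uo a - Uo b| ≤ k * |a - b|)
    {x : ℝ} (hlcx : Tendsto u (nhdsWithin x (Set.Iio x)) (nhds (u x)))
    {ξ : ℝ} (hval : UT u xc x = Uo ξ + T * legendre f ((x - ξ) / T)) :
    (x - ξ) / T ≤ deriv f (u x) := by
  set p := (x - ξ) / T with hp
  have key : ∀ θ0 : ℝ, 0 < θ0 → P.h (p - θ0) ≤ u x := by
    intro θ0 hθ0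
    have ev : ∀ θ ∈ Set.Ioo (0:ℝ) (T * θ0),
        P.h (p - θ0) ≤ (UT u xc x - UT u xc (x - θ)) / θ := by
      intro θ hθ
      obtain ⟨hθ1, hθ2⟩ := hθ
      obtain ⟨ξθ, hminθ, hvalθ⟩ := hl_minimizer P hT hk hlip (x - θ)
      have h1 : UT u xc (x - θ) ≤ Uo ξ + T * legendre f ((x - θ - ξ) / T) := by
        rw [← hHL (x - θ), hvalθ]; exact hminθ ξ
      set q := (x - θ - ξ) / T with hq
      have hqeq : q = p - θ / T := by rw [hq, hp]; ring
      have hsg := P.subgrad p q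
      have hqge : p - θ0 ≤ q := by
        have : θ / T < θ0 := (div_lt_iff₀ hT).2 (by linarith)
        rw [hqeq]; linarith
      have hmono := P.hmono.monotone hqge
      have hpq : p - q = θ / T := by rw [hqeq]; ring
      rw [hpq] at hsg
      have h2 : θ * P.h q ≤ T * legendre f p - T * legendre f q := by
        have h3 := mul_le_mul_of_nonneg_left hsg (le_of_lt hT)
        have h4 : T * (θ / T * P.h q) = θ * P.h q := by field_simp
        nlinarith [h3]
      rw [le_div_iff₀ hθ1]
      nlinarith [hmono, h2]
    apply ge_of_tendsto (left_quot_tendsto hu hC hlcx xc)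
    filter_upwards [Ioo_mem_nhdsGT_of_mem
      (Set.mem_Ico.2 ⟨le_refl (0:ℝ), mul_pos hT hθ0⟩)] with θ hθ
    exact ev θ hθ
  have hall : ∀ θ0 : ℝ, 0 < θ0 → p - θ0 ≤ deriv f (u x) := by
    intro θ0 hθ0
    have h1 := P.gmono.monotone (key θ0 hθ0)
    rwa [P.gh] at h1
  by_contra hcon
  push_neg at hcon
  have := hall ((p - deriv f (u x)) / 2) (by linarith)
  linarith

theorem g_upper {f : ℝ → ℝ} (P : LegPack f) {T : ℝ} (hT : 0 < T)
    {u : ℝ → ℝ} (hu : Measurable u) {C : ℝ} (hC : ∀ x, |u x| ≤ C) (xc : ℝ)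
    {Uo : ℝ → ℝ} (hHL : ∀ z, HopfLax f T Uo z = UT u xc z)
    {k : ℝ} (hk : 0 ≤ k) (hlip : ∀ a b : ℝ, |Uo a - Uo b| ≤ k * |a - b|)
    {x y : ℝ} (hxy : x < y)
    (hlcy : Tendsto u (nhdsWithin y (Set.Iio y)) (nhds (u y)))
    {ξx : ℝ} (hminx : ∀ ξ', Uo ξx + T * legendre f ((x - ξx) / T)
        ≤ Uo ξ' + T * legendre f ((x - ξ') / T)) :
    deriv f (u y) ≤ (y - ξx) / T := by
  have key : u y ≤ P.h ((y - ξx) / T) := by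
    apply le_of_tendsto (left_quot_tendsto hu hC hlcy xc)
    filter_upwards [Ioo_mem_nhdsGT_of_mem
      (Set.mem_Ico.2 ⟨le_refl (0:ℝ), show (0:ℝ) < y - x by linarith⟩)] with θ hθ
    obtain ⟨hθ1, hθ2⟩ := hθ
    obtain ⟨ξθ, hminθ, hvalθ⟩ := hl_minimizer P hT hk hlip (y - θ)
    obtain ⟨ξy, hminy, hvaly⟩ := hl_minimizer P hT hk hlip y
    have hm : ξx ≤ ξθ := min_mono P hT (by linarith : x < y - θ) hminx hminθ
    have h1 : UT u xc y ≤ Uo ξθ + T * legendre f ((y - ξθ) / T) := by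
      rw [← hHL y, hvaly]; exact hminy ξθ
    have h2 : UT u xc (y - θ) = Uo ξθ + T * legendre f ((y - θ - ξθ) / T) := by
      rw [← hHL (y - θ), hvalθ]
    set p' := (y - ξθ) / T with hp'
    set q' := (y - θ - ξθ) / T with hq'
    have hqp : q' - p' = -(θ / T) := by rw [hq', hp']; ring
    have hsg := P.subgrad q' p'
    rw [hqp] at hsg
    have h3 : T * legendre f p' - T * legendre f q' ≤ θ * P.h p' := by
      have h4 := mul_le_mul_of_nonneg_left hsg (le_of_lt hT)
      have h5 : T * (-(θ / T) * P.h p') = -(θ * P.h p') := by field_simp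
      nlinarith [h4]
    have hple : p' ≤ (y - ξx) / T := by
      rw [hp', div_le_div_iff₀ hT hT]; nlinarith
    have hmono := P.hmono.monotone hple
    rw [div_le_iff₀ hθ1]
    nlinarith [hmono, h3]
  have h1 := P.gmono.monotone key
  rwa [P.gh] at h1


theorem stmt_11 (f : ℝ → ℝ) (hf : CondF f) (T : ℝ) (hT : 0 < T)
    (J : Set ℝ) (hJne : J.Nonempty) (hJcl : IsClosed J) (hJoc : J.OrdConnected)
    (uT : ℝ → ℝ) (huT : Measurable uT) (C : ℝ) (hC : ∀ x, |uT x| ≤ C)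
    (hlc : LeftCts uT) (huTJ : ∀ x, uT x ∈ J) (xc : ℝ) :
    Oleinik f T uT ↔
      ∃ Uo : ℝ → ℝ, (∃ K, LipschitzWith K Uo) ∧ (∀ᵐ x ∂volume, deriv Uo x ∈ J) ∧
        ∀ x : ℝ, HopfLax f T Uo x = UT uT xc x := by
  have P : LegPack f := hf.pack
  constructor
  · intro hol
    refine ⟨Uflat f T uT xc, ⟨Real.toNNReal C, flat_lipschitz P hT huT hC xc⟩, ?_,
      flat_hopflax P hT huT hC xc hol⟩
    set A := sInf (Set.range uT) with hA
    set B := sSup (Set.range uT) with hB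
    have hbdb : BddBelow (Set.range uT) :=
      ⟨-C, by rintro _ ⟨z, rfl⟩; linarith [(abs_le.1 (hC z)).1]⟩
    have hbda : BddAbove (Set.range uT) :=
      ⟨C, by rintro _ ⟨z, rfl⟩; exact (abs_le.1 (hC z)).2⟩
    have hAb : ∀ x, A ≤ uT x := fun x => csInf_le hbdb ⟨x, rfl⟩
    have hBb : ∀ x, uT x ≤ B := fun x => le_csSup hbda ⟨x, rfl⟩
    have hsubJ : closure (Set.range uT) ⊆ J :=
      closure_minimal (by rintro _ ⟨z, rfl⟩; exact huTJ z) hJcl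
    have hAJ : A ∈ J := hsubJ (csInf_mem_closure ⟨uT 0, 0, rfl⟩ hbdb)
    have hBJ : B ∈ J := hsubJ (csSup_mem_closure ⟨uT 0, 0, rfl⟩ hbda)
    have hIcc : Set.Icc A B ⊆ J := hJoc.out hAJ hBJ
    filter_upwards [flat_deriv_mem P hT huT hC hAb hBb xc] with x hx
    exact hIcc hx
  · rintro ⟨Uo, ⟨K, hK⟩, _, hHL⟩
    intro x Δ hΔ
    have hk : (0:ℝ) ≤ (K:ℝ) := K.coe_nonneg
    have hlip : ∀ a b : ℝ, |Uo a - Uo b| ≤ (K:ℝ) * |a - b| := by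
      intro a b
      have := hK.dist_le_mul a b
      rwa [Real.dist_eq, Real.dist_eq] at this
    obtain ⟨ξx, hminx, hvalx⟩ := hl_minimizer P hT hk hlip x
    have hvalx' : UT uT xc x = Uo ξx + T * legendre f ((x - ξx) / T) := by
      rw [← hHL x, hvalx]
    have hlow := g_lower P hT huT hC xc hHL hk hlip (hlc x) hvalx'
    have hupp := g_upper P hT huT hC xc hHL hk hlip
      (show x < x + Δ by linarith) (hlc (x + Δ)) hminx
    have hring : (x + Δ - ξx) / T - (x - ξx) / T = Δ / T := by ring
    linarith
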